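/- For all x, y ∈ ℚ_p one has σ(y)·Σ_{a ∈ ℤ_p/pℤ_p} σ(p^{−1}(x+ay)) = p·σ(p^{−1}x)·σ(p^{−1}y) + σ(x)·σ(y) − σ(x)·σ(p^{−1}y). -/

import Mathlib

noncomputable section
open scoped Classical

/-- The characteristic function σ of ℤ_p inside ℚ_p: `σ(x) = 1` if `x ∈ ℤ_p`, else 0. -/
def pind {p : ℕ} [Fact p.Prime] (x : ℚ_[p]) : ℝ := if ‖x‖ ≤ 1 then 1 else 0

lemma norm_pinv_mul {p : ℕ} [Fact p.Prime] (w : ℚ_[p]) :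
    ‖(p : ℚ_[p])⁻¹ * w‖ = (p : ℝ) * ‖w‖ := by
  have hp : (1 : ℝ) < p := Nat.one_lt_cast.mpr (Fact.out : p.Prime).one_lt
  rw [norm_mul, norm_inv, Padic.norm_p, inv_inv]

lemma pinv_le_one_iff {p : ℕ} [Fact p.Prime] (w : ℚ_[p]) :
    ‖(p : ℚ_[p])⁻¹ * w‖ ≤ 1 ↔ ‖w‖ < 1 := by
  have hp : (0 : ℝ) < p := Nat.cast_pos.mpr (Fact.out : p.Prime).pos
  rw [norm_pinv_mul]
  constructor
  · intro h
    have h' : ‖w‖ ≤ (p : ℝ)⁻¹ := by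
      rw [← le_div_iff₀' hp] at h
      simpa [one_div] using h
    have := (Padic.norm_le_pow_iff_norm_lt_pow_add_one w (-1)).mp (by
      simpa [zpow_neg_one] using h')
    simpa using this
  · intro h
    have h' : ‖w‖ ≤ (p : ℝ)⁻¹ := by
      have := (Padic.norm_le_pow_iff_norm_lt_pow_add_one w (-1)).mpr (by simpa using h)
      simpa [zpow_neg_one] using this
    calc (p : ℝ) * ‖w‖ ≤ (p : ℝ) * (p : ℝ)⁻¹ := by
          exact mul_le_mul_of_nonneg_left h' hp.le
      _ = 1 := mul_inv_cancel₀ hp.ne'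

/-- Key counting lemma: if `‖x‖ ≤ 1` and `‖y‖ = 1`, exactly one residue `a` mod `p`
makes `x + a y ≡ 0 (mod p)`. -/
lemma key_sum {p : ℕ} [Fact p.Prime] (x y : ℚ_[p]) (hx : ‖x‖ ≤ 1) (hy : ‖y‖ = 1) :
    ∑ a ∈ Finset.range p, pind ((p : ℚ_[p])⁻¹ * (x + (a : ℚ_[p]) * y)) = 1 := by
  haveI : NeZero p := ⟨(Fact.out : p.Prime).ne_zero⟩
  set X : ℤ_[p] := ⟨x, hx⟩ with hX
  set Y : ℤ_[p] := ⟨y, hy.le⟩ with hYdef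
  have hYunit : IsUnit Y := PadicInt.isUnit_iff.mpr hy
  have hY0 : PadicInt.toZMod Y ≠ 0 := by
    have := hYunit.map (PadicInt.toZMod (p := p))
    exact this.ne_zero
  set c : ZMod p := -(PadicInt.toZMod X) / PadicInt.toZMod Y with hc
  have hterm : ∀ a ∈ Finset.range p,
      pind ((p : ℚ_[p])⁻¹ * (x + (a : ℚ_[p]) * y)) = if a = c.val then (1 : ℝ) else 0 := by
    intro a ha
    have hnorm : ((X + (a : ℤ_[p]) * Y : ℤ_[p]) : ℚ_[p]) = x + (a : ℚ_[p]) * y := by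
      push_cast [hX, hYdef]
      rfl
    have hlt : ‖x + (a : ℚ_[p]) * y‖ < 1 ↔ (a : ZMod p) = c := by
      rw [← hnorm]
      have : ‖((X + (a : ℤ_[p]) * Y : ℤ_[p]) : ℚ_[p])‖ = ‖(X + (a : ℤ_[p]) * Y : ℤ_[p])‖ := rfl
      rw [this, PadicInt.norm_lt_one_iff_dvd, ← Ideal.mem_span_singleton,
        ← PadicInt.maximalIdeal_eq_span_p, ← PadicInt.ker_toZMod, RingHom.mem_ker,
        map_add, map_mul, map_natCast]
      constructor
      · intro h
        rw [hc, eq_div_iff hY0]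
        linear_combination h
      · intro h
        rw [h, hc]
        field_simp
        ring
    have hval : ((a : ZMod p) = c) ↔ a = c.val := by
      constructor
      · intro h
        have := congrArg ZMod.val h
        rwa [ZMod.val_natCast_of_lt (Finset.mem_range.mp ha)] at this
      · intro h
        rw [h, ZMod.natCast_val, ZMod.cast_id]
    simp only [pind, pinv_le_one_iff]
    exact if_congr (hlt.trans hval) rfl rfl
  rw [Finset.sum_congr rfl hterm, Finset.sum_ite_eq' (Finset.range p) c.val (fun _ => (1 : ℝ)),
    if_pos (Finset.mem_range.mpr (ZMod.val_lt c))]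

/-- for all x, y ∈ ℚ_p,
`σ(y)·Σ_{a ∈ ℤ_p/pℤ_p} σ(p⁻¹(x+ay)) = p·σ(p⁻¹x)·σ(p⁻¹y) + σ(x)·σ(y) − σ(x)·σ(p⁻¹y)`. -/
theorem stmt10 (p : ℕ) [Fact p.Prime] (x y : ℚ_[p]) :
    pind y * (∑ a ∈ Finset.range p, pind ((p : ℚ_[p])⁻¹ * (x + (a : ℚ_[p]) * y)))
      = (p : ℝ) * pind ((p : ℚ_[p])⁻¹ * x) * pind ((p : ℚ_[p])⁻¹ * y)
          + pind x * pind y - pind x * pind ((p : ℚ_[p])⁻¹ * y) := by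
  have hp1 : (1 : ℝ) < p := Nat.one_lt_cast.mpr (Fact.out : p.Prime).one_lt
  by_cases hy : ‖y‖ ≤ 1
  · by_cases hpy : ‖y‖ < 1
    · -- case pind (p⁻¹ y) = 1
      have hpy1 : pind ((p : ℚ_[p])⁻¹ * y) = 1 := by
        rw [pind, if_pos ((pinv_le_one_iff y).mpr hpy)]
      have hterm : ∀ a ∈ Finset.range p,
          pind ((p : ℚ_[p])⁻¹ * (x + (a : ℚ_[p]) * y)) = pind ((p : ℚ_[p])⁻¹ * x) := by
        intro a _
        have hay : ‖(a : ℚ_[p]) * y‖ < 1 :=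
          lt_of_le_of_lt (by
            calc ‖(a : ℚ_[p]) * y‖ = ‖(a : ℚ_[p])‖ * ‖y‖ := norm_mul _ _
              _ ≤ 1 * ‖y‖ := mul_le_mul_of_nonneg_right (Padic.norm_int_le_one a)
                  (norm_nonneg _)
              _ = ‖y‖ := one_mul _) hpy
        have : (‖x + (a : ℚ_[p]) * y‖ < 1) ↔ ‖x‖ < 1 := by
          constructor
          · intro h
            have : ‖x + (a : ℚ_[p]) * y + -((a : ℚ_[p]) * y)‖ < 1 := by
              apply lt_of_le_of_lt (Padic.nonarchimedean _ _)
              simpa using max_lt h hay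
            simpa using this
          · intro h
            exact lt_of_le_of_lt (Padic.nonarchimedean _ _) (max_lt h hay)
        simp only [pind, pinv_le_one_iff]
        exact if_congr this rfl rfl
      rw [Finset.sum_congr rfl hterm, Finset.sum_const, Finset.card_range, nsmul_eq_mul]
      have h1 : pind y = 1 := if_pos hy
      rw [h1, hpy1]
      ring
    · -- ‖y‖ = 1
      have hy1 : ‖y‖ = 1 := le_antisymm hy (not_lt.mp hpy)
      have hpy0 : pind ((p : ℚ_[p])⁻¹ * y) = 0 := by
        rw [pind, if_neg]
        rw [pinv_le_one_iff]
        exact hpy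
      by_cases hx : ‖x‖ ≤ 1
      · have h1 : pind y = 1 := if_pos hy
        have h2 : pind x = 1 := if_pos hx
        rw [key_sum x y hx hy1, h1, h2, hpy0]
        ring
      · -- ‖x‖ > 1 : every summand is 0
        have hx' : 1 < ‖x‖ := not_le.mp hx
        have hterm : ∀ a ∈ Finset.range p,
            pind ((p : ℚ_[p])⁻¹ * (x + (a : ℚ_[p]) * y)) = 0 := by
          intro a _
          have hay : ‖(a : ℚ_[p]) * y‖ ≤ 1 := by
            calc ‖(a : ℚ_[p]) * y‖ = ‖(a : ℚ_[p])‖ * ‖y‖ := norm_mul _ _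
              _ ≤ 1 * 1 := mul_le_mul (Padic.norm_int_le_one a) hy (norm_nonneg _)
                  zero_le_one
              _ = 1 := one_mul _
          have : ‖x + (a : ℚ_[p]) * y‖ = ‖x‖ :=
            Padic.add_eq_max_of_ne (by
              intro h
              exact absurd (h ▸ hx') (not_lt.mpr hay)) ▸ by
                rw [max_eq_left (le_of_lt (lt_of_le_of_lt hay hx'))]
          simp only [pind, pinv_le_one_iff, this]
          rw [if_neg (not_lt.mpr hx'.le)]
        have h2 : pind x = 0 := if_neg hx
        rw [Finset.sum_congr rfl hterm, Finset.sum_const, Finset.card_range, smul_zero,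
          h2, hpy0]
        ring
  · -- ‖y‖ > 1
    have hy' : ¬ ‖(p : ℚ_[p])⁻¹ * y‖ ≤ 1 := by
      rw [pinv_le_one_iff]
      intro h
      exact hy h.le
    rw [show pind y = 0 from if_neg hy, show pind ((p : ℚ_[p])⁻¹ * y) = 0 from if_neg hy']
    ring
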